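/- Let H be a d-dimensional affine subspace of ℝ^N and σ a non-degenerate simplex with dim σ ≤ d whose vertices all lie within distance t ≥ 0 of H. Then sin ∠(Aff σ, H) ≤ 2·t·dim(σ)/height(σ), where height(σ) = min_{v ∈ σ} d(v, Aff(σ \ {v})) is the minimal altitude of σ. -/

import Mathlib

open scoped Classical
open Metric Module

/-- The angle between two subspaces of an inner product space:
`∠(V₀, V₁) = max_{v₀ ∈ V₀, v₀ ≠ 0} min_{v₁ ∈ V₁, v₁ ≠ 0} ∠(v₀, v₁)`. -/
noncomputable def subspaceAngle {E : Type*} [NormedAddCommGroup E] [InnerProductSpace ℝ E]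
    (V₀ V₁ : Submodule ℝ E) : ℝ :=
  sSup {θ : ℝ | ∃ v₀ ∈ V₀, v₀ ≠ 0 ∧
    θ = sInf {φ : ℝ | ∃ v₁ ∈ V₁, v₁ ≠ 0 ∧ φ = InnerProductGeometry.angle v₀ v₁}}

/-- The height (minimal altitude) of a simplex with vertex set `σ`:
`min_{v ∈ σ} d(v, Aff(σ \ {v}))`. -/
noncomputable def simplexHeight {N : ℕ} (σ : Finset (EuclideanSpace ℝ (Fin N)))
    (h : σ.Nonempty) : ℝ :=
  σ.inf' h fun v =>
    Metric.infDist v (affineSpan ℝ ((σ.erase v : Finset (EuclideanSpace ℝ (Fin N))) : Set (EuclideanSpace ℝ (Fin N))))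

section Auxiliary

open scoped RealInnerProductSpace
open InnerProductGeometry Real

/-- Any vector in the vector span of a finite set is a linear combination of the
points with coefficients summing to zero. -/
lemma whitney_repr_lemma {N : ℕ} (σ : Finset (EuclideanSpace ℝ (Fin N))) (hσne : σ.Nonempty)
    {u : EuclideanSpace ℝ (Fin N)} (hu : u ∈ vectorSpan ℝ (σ : Set (EuclideanSpace ℝ (Fin N)))) :
    ∃ lam : EuclideanSpace ℝ (Fin N) → ℝ,
      ∑ v ∈ σ, lam v = 0 ∧ ∑ v ∈ σ, lam v • v = u := by
  obtain ⟨p₀, hp₀⟩ := hσne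
  have hspan : vectorSpan ℝ (σ : Set (EuclideanSpace ℝ (Fin N)))
      = Submodule.span ℝ ((σ.image (fun v => v - p₀) : Finset (EuclideanSpace ℝ (Fin N))) : Set (EuclideanSpace ℝ (Fin N))) := by
    rw [vectorSpan_eq_span_vsub_set_right ℝ (Finset.mem_coe.2 hp₀)]
    congr 1
    ext x
    simp [vsub_eq_sub]
  rw [hspan, Submodule.mem_span_finset] at hu
  obtain ⟨f, -, hf⟩ := hu
  have hinj : Set.InjOn (fun v => v - p₀) σ := fun a _ b _ h => by
    simpa using sub_left_injective h
  rw [Finset.sum_image hinj] at hf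
  set S : ℝ := ∑ v ∈ σ, f (v - p₀) with hS
  refine ⟨fun v => f (v - p₀) - (if v = p₀ then S else 0), ?_, ?_⟩
  · rw [Finset.sum_sub_distrib, Finset.sum_ite_eq' σ p₀ (fun _ => S)]
    simp [hp₀, hS]
  · have h1 : ∑ v ∈ σ, (f (v - p₀) - if v = p₀ then S else 0) • v
        = ∑ v ∈ σ, f (v - p₀) • v - S • p₀ := by
      rw [Finset.sum_congr rfl (fun v _ => sub_smul _ _ v), Finset.sum_sub_distrib]
      congr 1
      rw [Finset.sum_congr rfl (fun v (hv : v ∈ σ) => by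
            by_cases h : v = p₀ <;> simp [h] : ∀ v ∈ σ, (if v = p₀ then S else 0) • v
              = if v = p₀ then S • p₀ else 0),
        Finset.sum_ite_eq' σ p₀ (fun _ => S • p₀)]
      simp [hp₀]
    rw [h1, ← hf]
    rw [Finset.sum_congr rfl (fun v _ => smul_sub (f (v - p₀)) v p₀), Finset.sum_sub_distrib,
      ← Finset.sum_smul]

/-- The altitude bound on coefficients: `|λ_w| · d(w, Aff(σ \ {w})) ≤ ‖u‖`. -/
lemma whitney_altitude_lemma {N : ℕ} (σ : Finset (EuclideanSpace ℝ (Fin N)))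
    (lam : EuclideanSpace ℝ (Fin N) → ℝ) (hsum : ∑ v ∈ σ, lam v = 0)
    {u : EuclideanSpace ℝ (Fin N)} (hu : ∑ v ∈ σ, lam v • v = u)
    {w : EuclideanSpace ℝ (Fin N)} (hw : w ∈ σ) :
    |lam w| * Metric.infDist w
      (affineSpan ℝ ((σ.erase w : Finset (EuclideanSpace ℝ (Fin N))) : Set (EuclideanSpace ℝ (Fin N)))) ≤ ‖u‖ := by
  by_cases hlw : lam w = 0
  · simp only [hlw, abs_zero, zero_mul]; exact norm_nonneg u
  set c : ℝ := (lam w)⁻¹ with hc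
  set q : EuclideanSpace ℝ (Fin N) := w - c • u with hq
  have hsumerase : ∑ v ∈ σ.erase w, lam v = -lam w := by
    have h2 := Finset.add_sum_erase σ lam hw
    rw [hsum] at h2
    linarith
  set μ : EuclideanSpace ℝ (Fin N) → ℝ := fun v => -(lam v) * c with hμ
  have hμsum : ∑ v : (σ.erase w : Finset (EuclideanSpace ℝ (Fin N))), μ v = 1 := by
    rw [Finset.sum_coe_sort (σ.erase w) μ]
    simp only [hμ, neg_mul, Finset.sum_neg_distrib, ← Finset.sum_mul, hsumerase]
    rw [hc, neg_neg, mul_inv_cancel₀ hlw]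
  have hqmem : q ∈ affineSpan ℝ ((σ.erase w : Finset (EuclideanSpace ℝ (Fin N))) : Set (EuclideanSpace ℝ (Fin N))) := by
    have hmem := affineCombination_mem_affineSpan (k := ℝ)
      (s := (Finset.univ : Finset (σ.erase w : Finset (EuclideanSpace ℝ (Fin N)))))
      (w := fun v => μ v) (by simpa using hμsum)
      (fun v : (σ.erase w : Finset (EuclideanSpace ℝ (Fin N))) => (v : EuclideanSpace ℝ (Fin N)))
    rw [Finset.affineCombination_eq_linear_combination _ _ _ (by simpa using hμsum)] at hmem
    have hrange : Set.range (fun v : (σ.erase w : Finset (EuclideanSpace ℝ (Fin N))) => (v : EuclideanSpace ℝ (Fin N)))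
        = ((σ.erase w : Finset (EuclideanSpace ℝ (Fin N))) : Set (EuclideanSpace ℝ (Fin N))) := by
      exact Subtype.range_coe
    rw [hrange] at hmem
    have hcomb : ∑ v : (σ.erase w : Finset (EuclideanSpace ℝ (Fin N))), μ v • (v : EuclideanSpace ℝ (Fin N)) = q := by
      rw [Finset.sum_coe_sort (σ.erase w) (fun v => μ v • v)]
      have : ∑ v ∈ σ.erase w, μ v • v = -c • (∑ v ∈ σ.erase w, lam v • v) := by
        rw [Finset.smul_sum]
        exact Finset.sum_congr rfl fun v _ => by
          simp [hμ, smul_smul]; ring_nf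
      rw [this]
      have herase : ∑ v ∈ σ.erase w, lam v • v = u - lam w • w := by
        have := Finset.add_sum_erase σ (fun v => lam v • v) hw
        rw [hu] at this
        linear_combination (norm := module) this
      rw [herase, hq, hc]
      have : (lam w)⁻¹ * lam w = 1 := inv_mul_cancel₀ hlw
      simp [smul_sub, smul_smul, this]
      module
    rwa [hcomb] at hmem
  have hdist : Metric.infDist w
      (affineSpan ℝ ((σ.erase w : Finset (EuclideanSpace ℝ (Fin N))) : Set (EuclideanSpace ℝ (Fin N)))) ≤ dist w q :=
    Metric.infDist_le_dist_of_mem hqmem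
  have hdq : dist w q = |c| * ‖u‖ := by
    rw [dist_eq_norm, hq]
    simp [norm_smul, abs_of_nonneg, Real.norm_eq_abs]
  calc |lam w| * Metric.infDist w _ ≤ |lam w| * (|c| * ‖u‖) := by
        apply mul_le_mul_of_nonneg_left (hdq ▸ hdist) (abs_nonneg _)
    _ = ‖u‖ := by
        rw [hc, abs_inv, ← mul_assoc, mul_inv_cancel₀ (abs_ne_zero.2 hlw), one_mul]

/-- The height of a nondegenerate simplex with at least two vertices is positive. -/
lemma whitney_height_pos {N : ℕ} (σ : Finset (EuclideanSpace ℝ (Fin N))) (hσne : σ.Nonempty)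
    (hindep : AffineIndependent ℝ (fun p : (σ : Set (EuclideanSpace ℝ (Fin N))) => (p : EuclideanSpace ℝ (Fin N))))
    (hcard : 2 ≤ σ.card) :
    0 < simplexHeight σ hσne := by
  rw [simplexHeight, Finset.lt_inf'_iff]
  intro v hv
  set A := affineSpan ℝ ((σ.erase v : Finset (EuclideanSpace ℝ (Fin N))) : Set (EuclideanSpace ℝ (Fin N))) with hA
  have hAne : ((A : Set (EuclideanSpace ℝ (Fin N)))).Nonempty := by
    obtain ⟨w, hw⟩ := Finset.card_pos.1 (by
      rw [Finset.card_erase_of_mem hv]; omega : 0 < (σ.erase v).card)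
    exact ⟨w, subset_affineSpan ℝ _ (Finset.mem_coe.2 hw)⟩
  have hclosed : IsClosed (A : Set (EuclideanSpace ℝ (Fin N))) :=
    A.closed_of_finiteDimensional
  have hnot : v ∉ (A : Set (EuclideanSpace ℝ (Fin N))) := by
    have h1 := hindep.notMem_affineSpan_diff ⟨v, Finset.mem_coe.2 hv⟩ Set.univ
    intro hmem
    apply h1
    have himg : (fun p : (σ : Set (EuclideanSpace ℝ (Fin N))) => (p : EuclideanSpace ℝ (Fin N))) ''
        (Set.univ \ {⟨v, Finset.mem_coe.2 hv⟩})
        = ((σ.erase v : Finset (EuclideanSpace ℝ (Fin N))) : Set (EuclideanSpace ℝ (Fin N))) := by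
      ext x
      constructor
      · rintro ⟨⟨y, hy⟩, ⟨-, hne⟩, rfl⟩
        simp only [Finset.coe_erase, Set.mem_diff, Set.mem_singleton_iff]
        refine ⟨hy, fun h => hne ?_⟩
        simp only [Set.mem_singleton_iff, Subtype.mk.injEq]
        exact h
      · intro hx
        simp only [Finset.coe_erase, Set.mem_diff, Set.mem_singleton_iff] at hx
        exact ⟨⟨x, Finset.mem_coe.2 hx.1⟩, ⟨Set.mem_univ _, by
          simp only [Set.mem_singleton_iff, Subtype.mk.injEq]; exact fun h => hx.2 h⟩, rfl⟩
    rw [himg]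
    exact hmem
  exact (hclosed.notMem_iff_infDist_pos hAne).1 hnot

/-- Bound on the sum of absolute values of coefficients summing to zero. -/
lemma whitney_sum_abs_lemma {α : Type*} [DecidableEq α] (σ : Finset α) (hσne : σ.Nonempty)
    (lam : α → ℝ) (hsum : ∑ v ∈ σ, lam v = 0)
    {M : ℝ} (hM : 0 ≤ M) (hbd : ∀ v ∈ σ, |lam v| ≤ M) :
    ∑ v ∈ σ, |lam v| ≤ 2 * ((σ.card - 1 : ℕ) : ℝ) * M := by
  have habs : ∀ x : ℝ, |x| = 2 * max x 0 - x := fun x => by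
    rcases le_or_gt x 0 with h | h
    · rw [abs_of_nonpos h, max_eq_right h]; ring
    · rw [abs_of_pos h, max_eq_left h.le]; ring
  have h1 : ∑ v ∈ σ, |lam v| = 2 * ∑ v ∈ σ, max (lam v) 0 := by
    rw [Finset.sum_congr rfl fun v _ => habs (lam v), Finset.sum_sub_distrib, hsum,
      Finset.mul_sum]
    ring
  set pos := σ.filter (fun v => 0 < lam v) with hpos
  have h2 : ∑ v ∈ σ, max (lam v) 0 = ∑ v ∈ pos, lam v := by
    rw [hpos, Finset.sum_filter]
    exact Finset.sum_congr rfl fun v _ => by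
      rcases lt_or_ge 0 (lam v) with h | h
      · simp [h, max_eq_left h.le]
      · simp [not_lt.2 h, max_eq_right h]
  have hposcard : pos.card ≤ σ.card - 1 := by
    have hne : pos ≠ σ := by
      intro h
      have : ∀ v ∈ σ, 0 < lam v := by
        intro v hv
        rw [← h] at hv
        exact (Finset.mem_filter.1 hv).2
      have := Finset.sum_pos this hσne
      rw [hsum] at this
      exact lt_irrefl 0 this
    have hsub : pos ⊆ σ := Finset.filter_subset _ _
    have := Finset.card_lt_card (lt_of_le_of_ne hsub hne)
    omega
  have h3 : ∑ v ∈ pos, lam v ≤ (pos.card : ℝ) * M := by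
    calc ∑ v ∈ pos, lam v ≤ ∑ v ∈ pos, M := Finset.sum_le_sum fun v hv =>
          le_trans (le_abs_self _) (hbd v (Finset.filter_subset _ _ hv))
      _ = (pos.card : ℝ) * M := by rw [Finset.sum_const, nsmul_eq_mul]
  have h4 : (pos.card : ℝ) ≤ ((σ.card - 1 : ℕ) : ℝ) := Nat.cast_le.2 hposcard
  calc ∑ v ∈ σ, |lam v| = 2 * ∑ v ∈ pos, lam v := by rw [h1, h2]
    _ ≤ 2 * ((pos.card : ℝ) * M) := by linarith
    _ ≤ 2 * ((σ.card - 1 : ℕ) : ℝ) * M := by nlinarith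

/-- Every vector in the span of the simplex is close to the direction of `H`. -/
lemma whitney_dist_lemma {N : ℕ} (H : AffineSubspace ℝ (EuclideanSpace ℝ (Fin N)))
    (hHne : (H : Set (EuclideanSpace ℝ (Fin N))).Nonempty)
    (σ : Finset (EuclideanSpace ℝ (Fin N))) (hσne : σ.Nonempty)
    (hpos : 0 < simplexHeight σ hσne)
    (t : ℝ) (ht : 0 ≤ t)
    (hclose : ∀ v ∈ σ, Metric.infDist v (H : Set (EuclideanSpace ℝ (Fin N))) ≤ t)
    {u : EuclideanSpace ℝ (Fin N)} (hu : u ∈ vectorSpan ℝ (σ : Set (EuclideanSpace ℝ (Fin N)))) :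
    ∃ u' ∈ H.direction,
      ‖u - u'‖ ≤ 2 * t * ((σ.card - 1 : ℕ) : ℝ) / simplexHeight σ hσne * ‖u‖ := by
  set h := simplexHeight σ hσne with hh
  obtain ⟨lam, hsum, hrep⟩ := whitney_repr_lemma σ hσne hu
  have hbd : ∀ v ∈ σ, |lam v| ≤ ‖u‖ / h := by
    intro v hv
    have h1 := whitney_altitude_lemma σ lam hsum hrep hv
    have h2 : h ≤ Metric.infDist v
        (affineSpan ℝ ((σ.erase v : Finset (EuclideanSpace ℝ (Fin N))) : Set (EuclideanSpace ℝ (Fin N)))) :=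
      Finset.inf'_le _ hv
    rw [le_div_iff₀ hpos]
    calc |lam v| * h ≤ |lam v| * Metric.infDist v _ :=
          mul_le_mul_of_nonneg_left h2 (abs_nonneg _)
      _ ≤ ‖u‖ := h1
  have hMnn : 0 ≤ ‖u‖ / h := div_nonneg (norm_nonneg u) hpos.le
  have hsumabs := whitney_sum_abs_lemma σ hσne lam hsum hMnn hbd
  have hcl : IsClosed (H : Set (EuclideanSpace ℝ (Fin N))) := H.closed_of_finiteDimensional
  have hex : ∀ v : EuclideanSpace ℝ (Fin N), ∃ y : EuclideanSpace ℝ (Fin N),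
      v ∈ σ → y ∈ (H : Set (EuclideanSpace ℝ (Fin N))) ∧ dist v y ≤ t := by
    intro v
    by_cases hv : v ∈ σ
    · obtain ⟨y, hyH, hyd⟩ := hcl.exists_infDist_eq_dist hHne v
      exact ⟨y, fun _ => ⟨hyH, by rw [← hyd]; exact hclose v hv⟩⟩
    · exact ⟨0, fun h => absurd h hv⟩
  choose q hq using hex
  obtain ⟨q₀, hq₀⟩ := hHne
  refine ⟨∑ v ∈ σ, lam v • q v, ?_, ?_⟩
  · have heq : ∑ v ∈ σ, lam v • q v = ∑ v ∈ σ, lam v • (q v - q₀) := by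
      rw [Finset.sum_congr rfl fun v _ => smul_sub (lam v) (q v) q₀, Finset.sum_sub_distrib,
        ← Finset.sum_smul, hsum, zero_smul, sub_zero]
    rw [heq]
    exact Submodule.sum_mem _ fun v hv => Submodule.smul_mem _ _
      (AffineSubspace.vsub_mem_direction ((hq v hv).1) hq₀)
  · have hdiff : u - ∑ v ∈ σ, lam v • q v = ∑ v ∈ σ, lam v • (v - q v) := by
      rw [Finset.sum_congr rfl fun v _ => smul_sub (lam v) v (q v), Finset.sum_sub_distrib, hrep]
    rw [hdiff]
    calc ‖∑ v ∈ σ, lam v • (v - q v)‖ ≤ ∑ v ∈ σ, ‖lam v • (v - q v)‖ :=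
          norm_sum_le _ _
      _ ≤ ∑ v ∈ σ, |lam v| * t := Finset.sum_le_sum fun v hv => by
          rw [norm_smul, Real.norm_eq_abs]
          exact mul_le_mul_of_nonneg_left (by rw [← dist_eq_norm]; exact (hq v hv).2)
            (abs_nonneg _)
      _ = (∑ v ∈ σ, |lam v|) * t := by rw [Finset.sum_mul]
      _ ≤ 2 * ((σ.card - 1 : ℕ) : ℝ) * (‖u‖ / h) * t := by
          apply mul_le_mul_of_nonneg_right hsumabs ht
      _ = 2 * t * ((σ.card - 1 : ℕ) : ℝ) / h * ‖u‖ := by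
          field_simp

/-- Properties of the infimum angle from a fixed vector to a nontrivial subspace. -/
lemma whitney_inf_angle_lemma {N : ℕ} (K : Submodule ℝ (EuclideanSpace ℝ (Fin N))) (hK : K ≠ ⊥)
    {u : EuclideanSpace ℝ (Fin N)} (hu : u ≠ 0) {B : ℝ} (hB : 0 ≤ B)
    (hdist : ∃ u' ∈ K, ‖u - u'‖ ≤ B * ‖u‖) :
    0 ≤ sInf {φ : ℝ | ∃ v₁ ∈ K, v₁ ≠ 0 ∧ φ = angle u v₁} ∧
    sInf {φ : ℝ | ∃ v₁ ∈ K, v₁ ≠ 0 ∧ φ = angle u v₁} ≤ π / 2 ∧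
    Real.sin (sInf {φ : ℝ | ∃ v₁ ∈ K, v₁ ≠ 0 ∧ φ = angle u v₁}) ≤ B := by
  obtain ⟨u', hu'K, hu'⟩ := hdist
  set T := {φ : ℝ | ∃ v₁ ∈ K, v₁ ≠ 0 ∧ φ = angle u v₁} with hT
  obtain ⟨w, hwK, hw0⟩ := Submodule.exists_mem_ne_zero_of_ne_bot hK
  have hTne : T.Nonempty := ⟨angle u w, w, hwK, hw0, rfl⟩
  have hTbdd : BddBelow T := ⟨0, fun φ ⟨v₁, _, _, hφ⟩ => hφ ▸ angle_nonneg u v₁⟩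
  have h0 : 0 ≤ sInf T := le_csInf hTne fun φ ⟨v₁, _, _, hφ⟩ => hφ ▸ angle_nonneg u v₁
  have hhalf : sInf T ≤ π / 2 := by
    have h1 : sInf T ≤ angle u w := csInf_le hTbdd ⟨w, hwK, hw0, rfl⟩
    have h2 : sInf T ≤ angle u (-w) :=
      csInf_le hTbdd ⟨-w, neg_mem hwK, neg_ne_zero.2 hw0, rfl⟩
    rw [angle_neg_right] at h2
    linarith
  refine ⟨h0, hhalf, ?_⟩
  set p : EuclideanSpace ℝ (Fin N) := (K.orthogonalProjectionOnto u : EuclideanSpace ℝ (Fin N)) with hp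
  have hpK : p ∈ K := (K.orthogonalProjectionOnto u).2
  have horth : u - p ∈ Kᗮ := Submodule.sub_starProjection_mem_orthogonal (K := K) u
  have hmin : ‖u - p‖ ≤ ‖u - u'‖ := by
    have hinner : ⟪u - p, p - u'⟫ = 0 := by
      rw [real_inner_comm]; exact horth (p - u') (sub_mem hpK hu'K)
    have hdecomp : u - u' = (u - p) + (p - u') := by abel
    have := norm_add_sq_real (u - p) (p - u')
    rw [hinner] at this
    have hsq : ‖u - u'‖ ^ 2 = ‖u - p‖ ^ 2 + ‖p - u'‖ ^ 2 := by
      rw [hdecomp, this]; ring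
    nlinarith [norm_nonneg (u - u'), norm_nonneg (u - p), norm_nonneg (p - u')]
  have hup : ‖u - p‖ ≤ B * ‖u‖ := le_trans hmin hu'
  by_cases hp0 : p = 0
  · have h1 : ‖u‖ ≤ B * ‖u‖ := by
      calc ‖u‖ = ‖u - p‖ := by rw [hp0, sub_zero]
        _ ≤ B * ‖u‖ := hup
    have hB1 : 1 ≤ B := by
      have hun : 0 < ‖u‖ := norm_pos_iff.2 hu
      nlinarith
    exact le_trans (Real.sin_le_one _) hB1
  · have hinnerup : ⟪u, p⟫ = ‖p‖ ^ 2 := by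
      have h1 : ⟪u - p, p⟫ = 0 := by rw [real_inner_comm]; exact horth p hpK
      have h2 : ⟪u, p⟫ - ⟪p, p⟫ = 0 := by rwa [inner_sub_left] at h1
      rw [real_inner_self_eq_norm_sq] at h2
      linarith
    have hpyth : ‖u‖ ^ 2 = ‖u - p‖ ^ 2 + ‖p‖ ^ 2 := by
      have h1 : ⟪u - p, p⟫ = 0 := by rw [real_inner_comm]; exact horth p hpK
      have := norm_add_sq_real (u - p) p
      rw [h1] at this
      calc ‖u‖ ^ 2 = ‖(u - p) + p‖ ^ 2 := by rw [sub_add_cancel]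
        _ = ‖u - p‖ ^ 2 + ‖p‖ ^ 2 := by rw [this]; ring
    have hun : 0 < ‖u‖ := norm_pos_iff.2 hu
    have hpn : 0 < ‖p‖ := norm_pos_iff.2 hp0
    set a := angle u p with ha
    have haT : a ∈ T := ⟨p, hpK, hp0, rfl⟩
    have hcos : Real.cos a = ‖p‖ / ‖u‖ := by
      rw [ha, cos_angle, hinnerup]
      rw [sq]
      field_simp
    have hahalf : a ≤ π / 2 := by
      by_contra hlt
      push_neg at hlt
      have hapi : a ≤ π := angle_le_pi u p
      have : Real.cos a < 0 := Real.cos_neg_of_pi_div_two_lt_of_lt hlt (by linarith [Real.pi_pos])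
      rw [hcos] at this
      exact absurd this (not_lt.2 (div_nonneg hpn.le hun.le))
    have hsina : Real.sin a = ‖u - p‖ / ‖u‖ := by
      have h1 := sin_angle_mul_norm_mul_norm u p
      have h2 : ⟪u, u⟫ * ⟪p, p⟫ - ⟪u, p⟫ * ⟪u, p⟫ = (‖p‖ * ‖u - p‖) ^ 2 := by
        rw [real_inner_self_eq_norm_sq, real_inner_self_eq_norm_sq, hinnerup]
        nlinarith
      rw [h2, Real.sqrt_sq (by positivity)] at h1
      have h3 : Real.sin a * (‖u‖ * ‖p‖) = ‖p‖ * ‖u - p‖ := h1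
      field_simp
      nlinarith
    have hsinb : Real.sin a ≤ B := by
      rw [hsina, div_le_iff₀ hun]
      exact hup
    have hmono := Real.strictMonoOn_sin.monotoneOn
    have hle : sInf T ≤ a := csInf_le hTbdd haT
    have h1 : Real.sin (sInf T) ≤ Real.sin a := by
      apply hmono _ _ hle
      · constructor <;> [linarith [Real.pi_pos]; linarith]
      · constructor
        · linarith [angle_nonneg u p, Real.pi_pos]
        · exact hahalf
    linarith

/-- If all elements of `S` lie in `[0, π/2]` and have sine at most `B ≥ 0`, then
the sine of the supremum of `S` is at most `B`. -/
lemma whitney_sin_sSup_le {S : Set ℝ} {B : ℝ} (hB : 0 ≤ B)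
    (hS : ∀ θ ∈ S, 0 ≤ θ ∧ θ ≤ π / 2 ∧ Real.sin θ ≤ B) :
    Real.sin (sSup S) ≤ B := by
  rcases Set.eq_empty_or_nonempty S with hE | hne
  · rw [hE, Real.sSup_empty, Real.sin_zero]; exact hB
  rcases le_or_gt 1 B with h1 | h1
  · exact le_trans (Real.sin_le_one _) h1
  have hbdd : BddAbove S := ⟨π / 2, fun θ hθ => (hS θ hθ).2.1⟩
  have harc : ∀ θ ∈ S, θ ≤ Real.arcsin B := by
    intro θ hθ
    obtain ⟨h0, hh, hs⟩ := hS θ hθ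
    by_contra hlt
    push_neg at hlt
    have h2 : Real.sin (Real.arcsin B) < Real.sin θ := by
      apply Real.strictMonoOn_sin _ _ hlt
      · exact ⟨Real.neg_pi_div_two_le_arcsin B, Real.arcsin_le_pi_div_two B⟩
      · exact ⟨by linarith [Real.pi_pos], hh⟩
    rw [Real.sin_arcsin (by linarith) h1.le] at h2
    linarith
  have hsup_le : sSup S ≤ Real.arcsin B := csSup_le hne harc
  obtain ⟨θ₀, hθ₀⟩ := hne
  have hsup_ge : 0 ≤ sSup S := le_trans (hS θ₀ hθ₀).1 (le_csSup hbdd hθ₀)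
  have : Real.sin (sSup S) ≤ Real.sin (Real.arcsin B) :=
    Real.strictMonoOn_sin.monotoneOn
      ⟨by linarith [Real.pi_pos], le_trans hsup_le (Real.arcsin_le_pi_div_two B)⟩
      ⟨Real.neg_pi_div_two_le_arcsin B, Real.arcsin_le_pi_div_two B⟩ hsup_le
  rw [Real.sin_arcsin (by linarith) h1.le] at this
  exact this

end Auxiliary

/-- **Whitney angle bound.**  Let `H` be a `d`-dimensional affine subspace of
`ℝ^N` and `σ` a non-degenerate simplex with `dim σ ≤ d` all of whose vertices lie
within distance `t` of `H`.  Then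
`sin ∠(Aff σ, H) ≤ 2 t dim(σ) / height(σ)`. -/
theorem whitney_angle_bound
    {N d : ℕ} (H : AffineSubspace ℝ (EuclideanSpace ℝ (Fin N)))
    (hHne : (H : Set (EuclideanSpace ℝ (Fin N))).Nonempty)
    (hHdim : Module.finrank ℝ H.direction = d)
    (σ : Finset (EuclideanSpace ℝ (Fin N))) (hσne : σ.Nonempty)
    (hindep : AffineIndependent ℝ (fun p : (σ : Set (EuclideanSpace ℝ (Fin N))) => (p : EuclideanSpace ℝ (Fin N))))
    (hdim : σ.card - 1 ≤ d)
    (t : ℝ) (ht : 0 ≤ t)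
    (hclose : ∀ v ∈ σ, Metric.infDist v (H : Set (EuclideanSpace ℝ (Fin N))) ≤ t) :
    Real.sin (subspaceAngle (affineSpan ℝ (σ : Set (EuclideanSpace ℝ (Fin N)))).direction H.direction) ≤
      2 * t * ((σ.card - 1 : ℕ) : ℝ) / simplexHeight σ hσne := by
  by_cases hcard : σ.card = 1
  · -- degenerate case: a single point
    have hbot : (affineSpan ℝ (σ : Set (EuclideanSpace ℝ (Fin N)))).direction = ⊥ := by
      obtain ⟨v, hv⟩ := Finset.card_eq_one.1 hcard
      rw [direction_affineSpan, hv]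
      simp [vectorSpan_singleton]
    have hempty : {θ : ℝ | ∃ v₀ ∈ (affineSpan ℝ (σ : Set (EuclideanSpace ℝ (Fin N)))).direction,
        v₀ ≠ 0 ∧ θ = sInf {φ : ℝ | ∃ v₁ ∈ H.direction, v₁ ≠ 0 ∧
          φ = InnerProductGeometry.angle v₀ v₁}} = ∅ := by
      ext θ
      simp only [Set.mem_setOf_eq, Set.mem_empty_iff_false, iff_false, not_exists]
      rintro v₀ ⟨hv₀, hne, -⟩
      rw [hbot, Submodule.mem_bot] at hv₀
      exact hne hv₀
    rw [subspaceAngle, hempty, Real.sSup_empty, Real.sin_zero, hcard]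
    simp
  · have hcard2 : 2 ≤ σ.card := by
      have := hσne.card_pos
      omega
    have hpos : 0 < simplexHeight σ hσne := whitney_height_pos σ hσne hindep hcard2
    set B : ℝ := 2 * t * ((σ.card - 1 : ℕ) : ℝ) / simplexHeight σ hσne with hB
    have hBnn : 0 ≤ B := by
      apply div_nonneg _ hpos.le
      positivity
    have hKne : H.direction ≠ ⊥ := by
      intro hb
      rw [hb, finrank_bot] at hHdim
      omega
    rw [subspaceAngle]
    apply whitney_sin_sSup_le hBnn
    rintro θ ⟨v₀, hv₀, hv₀ne, rfl⟩
    rw [direction_affineSpan] at hv₀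
    obtain ⟨u', hu'K, hu'⟩ := whitney_dist_lemma H hHne σ hσne hpos t ht hclose hv₀
    exact whitney_inf_angle_lemma H.direction hKne hv₀ne hBnn ⟨u', hu'K, hu'⟩
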